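/- Let X be a complete bounded metric space and f : X → X a k-Lipschitzian mapping such that there exist 0 < γ < 1 and c > 0 with d(f^{n+1}(x), f^n(x)) ≤ c γⁿ for every x ∈ X and n ∈ ℕ. Then R x = lim_{n→∞} fⁿ(x) exists for every x and R : X → X is Hölder continuous. -/

import Mathlib

/-- If `X` is complete and bounded, `f` is `k`-Lipschitzian and
`d(f^{n+1}x, f^n x) ≤ c·γⁿ` with `0 < γ < 1`, `c > 0`, then `Rx = lim fⁿx` exists
and `R` is Hölder continuous. -/
theorem stmt_17 {X : Type*} [MetricSpace X] [CompleteSpace X]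
    (hbdd : Bornology.IsBounded (Set.univ : Set X))
    (f : X → X) (k : ℝ) (hk : ∀ x y, dist (f x) (f y) ≤ k * dist x y)
    (c γ : ℝ) (hγ0 : 0 < γ) (hγ1 : γ < 1) (hc : 0 < c)
    (hiter : ∀ (x : X) (n : ℕ), dist (f^[n + 1] x) (f^[n] x) ≤ c * γ ^ n) :
    ∃ R : X → X,
      (∀ x : X, Filter.Tendsto (fun n => f^[n] x) Filter.atTop (nhds (R x))) ∧
      ∃ C > (0 : ℝ), ∃ α ∈ Set.Ioc (0 : ℝ) 1,
        ∀ x y : X, dist (R x) (R y) ≤ C * dist x y ^ α := by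
  classical
  have hstep : ∀ x : X, ∀ n : ℕ, dist (f^[n] x) (f^[n+1] x) ≤ c * γ ^ n := by
    intro x n; rw [dist_comm]; exact hiter x n
  have hcauchy : ∀ x : X, CauchySeq (fun n => f^[n] x) :=
    fun x => cauchySeq_of_le_geometric γ c hγ1 (hstep x)
  choose R hR using fun x => cauchySeq_tendsto_of_complete (hcauchy x)
  refine ⟨R, hR, ?_⟩
  have h1γ : 0 < 1 - γ := by linarith
  -- distance to the limit
  have hlim : ∀ (x : X) (n : ℕ), dist (f^[n] x) (R x) ≤ c * γ ^ n / (1 - γ) :=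
    fun x n => dist_le_of_le_geometric_of_tendsto γ c hγ1 (hstep x) (hR x) n
  set K := max k 1 with hKdef
  have hK1 : (1:ℝ) ≤ K := le_max_right _ _
  have hK0 : (0:ℝ) < K := lt_of_lt_of_le one_pos hK1
  have hiterK : ∀ (x y : X) (n : ℕ), dist (f^[n] x) (f^[n] y) ≤ K ^ n * dist x y := by
    intro x y n
    induction n with
    | zero => simp
    | succ n ih =>
      rw [Function.iterate_succ_apply', Function.iterate_succ_apply']
      calc dist (f (f^[n] x)) (f (f^[n] y)) ≤ k * dist (f^[n] x) (f^[n] y) := hk _ _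
        _ ≤ K * dist (f^[n] x) (f^[n] y) :=
            mul_le_mul_of_nonneg_right (le_max_left _ _) dist_nonneg
        _ ≤ K * (K ^ n * dist x y) := mul_le_mul_of_nonneg_left ih hK0.le
        _ = K ^ (n+1) * dist x y := by ring
  set A := 2 * c / (1 - γ) with hAdef
  have hApos : 0 < A := by positivity
  have key : ∀ (x y : X) (n : ℕ),
      dist (R x) (R y) ≤ A * γ ^ n + K ^ n * dist x y := by
    intro x y n
    calc dist (R x) (R y)
        ≤ dist (R x) (f^[n] x) + dist (f^[n] x) (f^[n] y) + dist (f^[n] y) (R y) :=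
          dist_triangle4 _ _ _ _
      _ ≤ c * γ ^ n / (1 - γ) + K ^ n * dist x y + c * γ ^ n / (1 - γ) := by
          gcongr
          · rw [dist_comm]; exact hlim x n
          · exact hiterK x y n
          · exact hlim y n
      _ = A * γ ^ n + K ^ n * dist x y := by rw [hAdef]; ring
  -- bounded diameter
  obtain ⟨D₀, hD₀⟩ := Metric.isBounded_iff.mp hbdd
  set D := max D₀ 0 with hDdef
  have hD0 : 0 ≤ D := le_max_right _ _
  have hD : ∀ x y : X, dist x y ≤ D :=
    fun x y => le_trans (hD₀ (Set.mem_univ x) (Set.mem_univ y)) (le_max_left _ _)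
  -- exponent
  set g := -Real.log γ with hgdef
  have hg : 0 < g := by
    have := Real.log_neg hγ0 hγ1; simp [hgdef]; linarith
  set l := Real.log K with hldef
  have hl : 0 ≤ l := Real.log_nonneg hK1
  set α := g / (l + g) with hαdef
  have hα0 : 0 < α := div_pos hg (by linarith)
  have hα1 : α ≤ 1 := (div_le_one (by linarith)).mpr (by linarith)
  have hαl : α * l = (1 - α) * g := by
    have hlg : l + g ≠ 0 := (by linarith : (0:ℝ) < l + g).ne'
    have hαlg : α * (l + g) = g := by rw [hαdef]; exact div_mul_cancel₀ g hlg
    linarith [hαlg]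
  refine ⟨A + K + D, by positivity, α, ⟨hα0, hα1⟩, ?_⟩
  intro x y
  set t := dist x y with htdef
  have ht0 : 0 ≤ t := dist_nonneg
  rcases eq_or_lt_of_le ht0 with ht | ht
  · -- t = 0
    have hxy : x = y := eq_of_dist_eq_zero ht.symm
    subst hxy
    simp [Real.zero_rpow (ne_of_gt hα0), ← ht]
  rcases le_or_gt 1 t with ht1 | ht1
  · -- t ≥ 1
    have h1 : (1:ℝ) ≤ t ^ α := Real.one_le_rpow ht1 hα0.le
    calc dist (R x) (R y) ≤ D := hD _ _
      _ ≤ D * t ^ α := le_mul_of_one_le_right hD0 h1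
      _ ≤ (A + K + D) * t ^ α := by
          apply mul_le_mul_of_nonneg_right _ (Real.rpow_nonneg ht0 _)
          linarith
  · -- 0 < t < 1
    have hlt : Real.log t < 0 := Real.log_neg ht ht1
    set m := -Real.log t with hmdef
    have hm : 0 < m := by simp [hmdef]; linarith
    set n := ⌈α * m / g⌉₊ with hndef
    have hn1 : α * m / g ≤ n := Nat.le_ceil _
    have hn2 : (n : ℝ) ≤ α * m / g + 1 := by
      have := Nat.ceil_lt_add_one (a := α * m / g) (by positivity)
      exact this.le
    have hγn : γ ^ n ≤ t ^ α := by
      have h1 : γ ^ n = Real.exp ((n : ℝ) * Real.log γ) := by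
        rw [← Real.exp_log hγ0, ← Real.exp_nat_mul, Real.log_exp]
      have h2 : t ^ α = Real.exp (α * Real.log t) := by
        rw [Real.rpow_def_of_pos ht, mul_comm]
      rw [h1, h2]
      apply Real.exp_le_exp.mpr
      have : α * m ≤ n * g := by
        rw [div_le_iff₀ hg] at hn1; linarith
      have hγlog : Real.log γ = -g := by simp [hgdef]
      have hmlog : Real.log t = -m := by simp [hmdef]
      rw [hγlog, hmlog]; nlinarith
    have hKn : K ^ n * t ≤ K * t ^ α := by
      have h1 : K ^ n = Real.exp ((n : ℝ) * l) := by
        rw [hldef, ← Real.exp_log hK0, ← Real.exp_nat_mul, Real.log_exp]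
      have h2 : t ^ α = Real.exp (α * Real.log t) := by
        rw [Real.rpow_def_of_pos ht, mul_comm]
      have h3 : t = Real.exp (Real.log t) := (Real.exp_log ht).symm
      have h4 : K = Real.exp l := by rw [hldef, Real.exp_log hK0]
      calc K ^ n * t = Real.exp ((n:ℝ) * l + Real.log t) := by
            rw [h1, Real.exp_add, Real.exp_log ht]
        _ ≤ Real.exp (l + α * Real.log t) := by
            apply Real.exp_le_exp.mpr
            have hmlog : Real.log t = -m := by simp [hmdef]
            rw [hmlog]
            -- (n : ℝ) * l ≤ l + (1 - α) * m
            have hnl : (n : ℝ) * l ≤ (α * m / g + 1) * l :=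
              mul_le_mul_of_nonneg_right hn2 hl
            have : α * m / g * l = (1 - α) * m := by
              rw [div_mul_eq_mul_div, mul_right_comm, hαl]
              field_simp
            nlinarith
        _ = K * t ^ α := by rw [Real.exp_add, ← h2, ← h4]
    calc dist (R x) (R y) ≤ A * γ ^ n + K ^ n * t := key x y n
      _ ≤ A * t ^ α + K * t ^ α :=
          add_le_add (mul_le_mul_of_nonneg_left hγn hApos.le) hKn
      _ ≤ (A + K + D) * t ^ α := by
          have hD' := mul_nonneg hD0 (Real.rpow_nonneg ht0 α)
          rw [add_mul, add_mul]
          linarith
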